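/- Let n ≥ 1, let A_k := E_{1k} ∈ M_n(ℂ) for k = 1,…,n (the matrix units with 1 in position (1,k)). Then |A_k| = E_{kk}, the operator norm of Σ_{k=1}^n |A_k| equals 1, and the operator norm of Σ_{k=1}^n A_k equals √n. Hence the constant √n in the inequality ‖Σ A_k‖_∞ ≤ √n ‖Σ |A_k|‖_∞ is attained. -/

import Mathlib

open Matrix
open scoped ComplexOrder

/-- Square root of a positive semidefinite matrix (as in the older Mathlib). -/
noncomputable def Matrix.PosSemidef.sqrt {n 𝕜 : Type*} [Fintype n] [RCLike 𝕜] [DecidableEq n]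
    {A : Matrix n n 𝕜} (hA : A.PosSemidef) : Matrix n n 𝕜 :=
  hA.1.eigenvectorUnitary.1 * diagonal ((↑) ∘ (hA.1.eigenvalues · |>.sqrt)) *
    (star hA.1.eigenvectorUnitary : Matrix n n 𝕜)

lemma Matrix.PosSemidef.posSemidef_sqrt {n 𝕜 : Type*} [Fintype n] [RCLike 𝕜] [DecidableEq n]
    {A : Matrix n n 𝕜} (hA : A.PosSemidef) : PosSemidef hA.sqrt := by
  apply PosSemidef.mul_mul_conjTranspose_same
  refine posSemidef_diagonal_iff.mpr fun i ↦ ?_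
  rw [Function.comp_apply, RCLike.nonneg_iff]
  constructor
  · simp only [RCLike.ofReal_re]
    exact Real.sqrt_nonneg _
  · simp only [RCLike.ofReal_im]

/-- The usual modulus `|Z| = (Zᴴ Z)^(1/2)` (positive semidefinite square root). -/
noncomputable def mAbs {k : Type*} [Fintype k] [DecidableEq k]
    (Z : Matrix k k ℂ) : Matrix k k ℂ :=
  (Matrix.posSemidef_conjTranspose_mul_self Z).sqrt

lemma mAbs_posSemidef {k : Type*} [Fintype k] [DecidableEq k]
    (Z : Matrix k k ℂ) : (mAbs Z).PosSemidef :=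
  Matrix.PosSemidef.posSemidef_sqrt _

lemma psd_half_smul {k : Type*} [Fintype k] [DecidableEq k]
    {M : Matrix k k ℂ} (h : M.PosSemidef) :
    ((2:ℂ)⁻¹ • M).PosSemidef := by
  rw [posSemidef_iff_dotProduct_mulVec]
  constructor
  · unfold Matrix.IsHermitian
    rw [conjTranspose_smul, h.1]
    norm_num
  · intro x
    rw [smul_mulVec, dotProduct_smul]
    exact smul_nonneg (by simp [Complex.le_def]) ((posSemidef_iff_dotProduct_mulVec.mp h).2 x)

/-- The arithmetic symmetric modulus `(|Z| + |Z*|)/2`. -/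
noncomputable def symMod {k : Type*} [Fintype k] [DecidableEq k]
    (Z : Matrix k k ℂ) : Matrix k k ℂ :=
  (2:ℂ)⁻¹ • (mAbs Z + mAbs Zᴴ)

lemma symMod_posSemidef {k : Type*} [Fintype k] [DecidableEq k]
    (Z : Matrix k k ℂ) : (symMod Z).PosSemidef :=
  psd_half_smul ((mAbs_posSemidef Z).add (mAbs_posSemidef Zᴴ))

lemma qsym_arg_psd {k : Type*} [Fintype k] [DecidableEq k]
    (Z : Matrix k k ℂ) :
    ((2:ℂ)⁻¹ • (mAbs Z ^ 2 + mAbs Zᴴ ^ 2)).PosSemidef :=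
  psd_half_smul (((mAbs_posSemidef Z).pow 2).add ((mAbs_posSemidef Zᴴ).pow 2))

/-- The quadratic symmetric modulus `((|Z|² + |Z*|²)/2)^(1/2)`. -/
noncomputable def qsymMod {k : Type*} [Fintype k] [DecidableEq k]
    (Z : Matrix k k ℂ) : Matrix k k ℂ :=
  (qsym_arg_psd Z).sqrt

lemma qsymMod_posSemidef {k : Type*} [Fintype k] [DecidableEq k]
    (Z : Matrix k k ℂ) : (qsymMod Z).PosSemidef :=
  Matrix.PosSemidef.posSemidef_sqrt _

/-- The Schatten `p`-norm, as the `ℓ^p` norm of the singular values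
(the eigenvalues of `|X|`). -/
noncomputable def schatten {k : Type*} [Fintype k] [DecidableEq k]
    (p : ℝ) (X : Matrix k k ℂ) : ℝ :=
  (∑ i, ((mAbs_posSemidef X).1.eigenvalues i) ^ p) ^ (1/p)

/-- The operator norm: the largest singular value. -/
noncomputable def opN {k : Type*} [Fintype k] [DecidableEq k]
    (X : Matrix k k ℂ) : ℝ :=
  ⨆ i, (mAbs_posSemidef X).1.eigenvalues i

/-- The Frobenius (Schatten-2) norm. -/
noncomputable def frob {k : Type*} [Fintype k] [DecidableEq k]
    (X : Matrix k k ℂ) : ℝ :=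
  Real.sqrt ((Xᴴ * X).trace.re)

lemma my_trace_eq_sum_eigenvalues {m : Type*} [Fintype m] [DecidableEq m]
    {A : Matrix m m ℂ} (hA : A.IsHermitian) :
    A.trace = ∑ i, (hA.eigenvalues i : ℂ) := by
  conv_lhs => rw [hA.spectral_theorem]
  rw [Unitary.conjStarAlgAut_apply, Matrix.trace_mul_cycle, Unitary.coe_star_mul_self, one_mul, Matrix.trace_diagonal]
  rfl

lemma my_eig_mem {m : Type*} [Fintype m] [DecidableEq m]
    {A : Matrix m m ℂ} (hA : A.IsHermitian) (c : ℝ)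
    (h : A * A = (c:ℂ) • A) (i : m) :
    hA.eigenvalues i = 0 ∨ hA.eigenvalues i = c := by
  set μ := hA.eigenvalues i with hμ
  set v := ⇑(hA.eigenvectorBasis i) with hvdef
  have hv : A *ᵥ v = (μ:ℂ) • v := by
    rw [hA.mulVec_eigenvectorBasis i, RCLike.real_smul_eq_coe_smul (K := ℂ)]; rfl
  have hvne : v ≠ 0 := by
    intro hv0
    exact hA.eigenvectorBasis.orthonormal.ne_zero i (by ext j; exact congrFun hv0 j)
  have h2 : ((μ:ℂ) * μ) • v = ((c:ℂ) * μ) • v := by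
    have h3 := congrArg (fun M => M *ᵥ v) h
    simp only [← Matrix.mulVec_mulVec, hv, Matrix.mulVec_smul, Matrix.smul_mulVec,
      smul_smul] at h3
    exact h3
  have h4 : ((μ:ℂ) * μ - (c:ℂ) * μ) • v = 0 := by rw [sub_smul, h2, sub_self]
  rcases smul_eq_zero.mp h4 with h5 | h5
  · have h6 : μ * μ - c * μ = 0 := by exact_mod_cast h5
    rcases mul_eq_zero.mp (by linarith : μ * (μ - c) = 0) with h7 | h7
    · exact Or.inl h7
    · exact Or.inr (by linarith)
  · exact absurd h5 hvne

lemma my_opN_eq {m : Type*} [Fintype m] [DecidableEq m] [Nonempty m]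
    (X : Matrix m m ℂ) (c : ℝ) (hc : 0 < c)
    (hmul : mAbs X * mAbs X = (c:ℂ) • mAbs X)
    (htr : 0 < ((mAbs X).trace.re)) : opN X = c := by
  set hH := (mAbs_posSemidef X).1 with hHdef
  have key : ∀ i, hH.eigenvalues i = 0 ∨ hH.eigenvalues i = c := my_eig_mem hH c hmul
  have hsum : (mAbs X).trace.re = ∑ i, hH.eigenvalues i := by
    rw [my_trace_eq_sum_eigenvalues hH]
    simp
  have hex : ∃ i, hH.eigenvalues i = c := by
    by_contra hcon
    push_neg at hcon
    have hall : ∀ i, hH.eigenvalues i = 0 := fun i => (key i).resolve_right (hcon i)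
    rw [hsum] at htr
    simp [hall] at htr
  obtain ⟨i0, hi0⟩ := hex
  refine le_antisymm (ciSup_le fun i => ?_) ?_
  · rcases key i with h | h
    · rw [h]; exact hc.le
    · exact h.le
  · rw [← hi0]
    exact le_ciSup (Set.Finite.bddAbove (Set.finite_range _)) i0

lemma my_psd_real_smul {k : Type*} [Fintype k] [DecidableEq k]
    {M : Matrix k k ℂ} (h : M.PosSemidef) {r : ℝ} (hr : 0 ≤ r) :
    (((r:ℂ)) • M).PosSemidef := by
  rw [posSemidef_iff_dotProduct_mulVec]
  constructor
  · unfold Matrix.IsHermitian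
    rw [conjTranspose_smul, h.1]
    simp
  · intro x
    rw [smul_mulVec, dotProduct_smul]
    exact smul_nonneg (by exact_mod_cast hr) ((posSemidef_iff_dotProduct_mulVec.mp h).2 x)

lemma my_eq_sqrt_of_sq_eq {m : Type*} [Fintype m] [DecidableEq m] {A B : Matrix m m ℂ}
    (hB : B.PosSemidef) (hA : A.PosSemidef) (h : B ^ 2 = A) : B = hA.sqrt := by
  open MatrixOrder in
  have h1 : CFC.sqrt A = hA.sqrt := by
    rw [CFC.sqrt_eq_real_sqrt A hA.nonneg, cfcₙ_eq_cfc, hA.1.cfc_eq, IsHermitian.cfc,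
      Unitary.conjStarAlgAut_apply]
    rfl
  open MatrixOrder in
  rw [← h1, eq_comm, CFC.sqrt_eq_iff A B hA.nonneg hB.nonneg, ← sq, h]

/-- For `A_k = E_{1k}`: `|A_k| = E_{kk}`, `‖Σ |A_k|‖_∞ = 1`,
`‖Σ A_k‖_∞ = √n`, so equality holds in `‖Σ A_k‖_∞ ≤ √n ‖Σ |A_k|‖_∞`. -/
theorem stmt19 (n : ℕ) (hn : 1 ≤ n) :
    (∀ k : Fin n,
      mAbs (Matrix.single (⟨0, hn⟩ : Fin n) k (1:ℂ)) =
        Matrix.single k k (1:ℂ)) ∧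
    opN (∑ k : Fin n, mAbs (Matrix.single (⟨0, hn⟩ : Fin n) k (1:ℂ))) = 1 ∧
    opN (∑ k : Fin n, Matrix.single (⟨0, hn⟩ : Fin n) k (1:ℂ)) = Real.sqrt n ∧
    opN (∑ k : Fin n, Matrix.single (⟨0, hn⟩ : Fin n) k (1:ℂ)) =
      Real.sqrt n *
        opN (∑ k : Fin n, mAbs (Matrix.single (⟨0, hn⟩ : Fin n) k (1:ℂ))) := by
  
  haveI : Nonempty (Fin n) := ⟨⟨0, hn⟩⟩
  set z : Fin n := ⟨0, hn⟩ with hz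
  have hnpos : (0:ℝ) < n := by exact_mod_cast hn
  have hsn : (0:ℝ) < Real.sqrt n := Real.sqrt_pos.mpr hnpos
  -- conjTranspose of std basis matrices
  have hct : ∀ a b : Fin n, (Matrix.single a b (1:ℂ))ᴴ = Matrix.single b a 1 := by
    intro a b
    ext i j
    simp [Matrix.conjTranspose_apply, Matrix.single, and_comm, apply_ite (star : ℂ → ℂ)]
  -- E_kk is PSD
  have hEkkPSD : ∀ k : Fin n, (Matrix.single k k (1:ℂ)).PosSemidef := by
    intro k
    have h1 : Matrix.single k k (1:ℂ) =
        (Matrix.single k k (1:ℂ))ᴴ * Matrix.single k k (1:ℂ) := by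
      rw [hct, Matrix.single_mul_single_same, one_mul]
    rw [h1]
    exact Matrix.posSemidef_conjTranspose_mul_self _
  -- part 1
  have habs : ∀ k : Fin n, mAbs (Matrix.single z k (1:ℂ)) =
      Matrix.single k k (1:ℂ) := by
    intro k
    unfold mAbs
    refine (my_eq_sqrt_of_sq_eq (hEkkPSD k) _ ?_).symm
    rw [pow_two, Matrix.single_mul_single_same, hct, Matrix.single_mul_single_same, one_mul]
  -- sum of E_kk = 1
  have hsum1 : (∑ k : Fin n, Matrix.single k k (1:ℂ)) = 1 := by
    ext i j
    simp only [Matrix.sum_apply, Matrix.single, Matrix.of_apply, Matrix.one_apply]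
    by_cases h : i = j
    · subst h; simp
    · rw [if_neg h]
      apply Finset.sum_eq_zero
      intro k _
      rw [if_neg]
      rintro ⟨rfl, rfl⟩
      exact h rfl
  have mAbs1 : mAbs (1 : Matrix (Fin n) (Fin n) ℂ) = 1 := by
    unfold mAbs
    exact (my_eq_sqrt_of_sq_eq Matrix.PosSemidef.one _ (by simp)).symm
  -- part 2
  have part2 : opN (∑ k : Fin n, mAbs (Matrix.single z k (1:ℂ))) = 1 := by
    have hrw : (∑ k : Fin n, mAbs (Matrix.single z k (1:ℂ))) = 1 := by
      simp only [habs]; exact hsum1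
    rw [hrw]
    refine my_opN_eq 1 1 one_pos ?_ ?_
    · rw [mAbs1]; simp
    · rw [mAbs1]; simp [Matrix.trace_one]; exact_mod_cast hnpos
  -- part 3 setup
  set S := ∑ k : Fin n, Matrix.single z k (1:ℂ) with hSdef
  set J : Matrix (Fin n) (Fin n) ℂ := Matrix.of (fun _ _ => (1:ℂ)) with hJdef
  have hSapp : ∀ i j, S i j = if z = i then 1 else 0 := by
    intro i j
    simp only [hSdef, Matrix.sum_apply, Matrix.single, Matrix.of_apply]
    by_cases h : z = i
    · simp [h]
    · simp [h]
  have hJ : Sᴴ * S = J := by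
    ext i j
    simp [Matrix.mul_apply, Matrix.conjTranspose_apply, hSapp, apply_ite (star : ℂ → ℂ),
      hJdef]
  have hJJ : J * J = (n:ℂ) • J := by
    ext i j
    simp [Matrix.mul_apply, hJdef]
  have hJtr : J.trace = (n:ℂ) := by
    simp [Matrix.trace, hJdef, Matrix.diag]
  set r : ℝ := (Real.sqrt n)⁻¹ with hr
  have hrn : (r:ℝ) * r * n = 1 := by
    rw [hr]
    rw [← Real.mul_self_sqrt hnpos.le]
    field_simp
    rw [Real.sq_sqrt hnpos.le, Real.sq_sqrt hnpos.le]
  have hJpsd : J.PosSemidef := hJ ▸ Matrix.posSemidef_conjTranspose_mul_self S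
  have hBdef : mAbs S = (r:ℂ) • J := by
    unfold mAbs
    refine (my_eq_sqrt_of_sq_eq (my_psd_real_smul hJpsd (inv_nonneg.mpr hsn.le)) _ ?_).symm
    rw [pow_two, Matrix.smul_mul, Matrix.mul_smul, hJJ, smul_smul, smul_smul, hJ]
    have h1 : ((((Real.sqrt n)⁻¹ : ℝ)):ℂ) * ((((Real.sqrt n)⁻¹ : ℝ)):ℂ) * ((n:ℕ):ℂ) = 1 := by
      exact_mod_cast hrn
    rw [h1, one_smul]
  have hsr : (Real.sqrt n : ℝ) * r = 1 := by
    rw [hr]; field_simp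
  have part3 : opN S = Real.sqrt n := by
    refine my_opN_eq S (Real.sqrt n) hsn ?_ ?_
    · rw [hBdef, Matrix.smul_mul, Matrix.mul_smul, hJJ, smul_smul, smul_smul, smul_smul]
      congr 1
      have h1 : (r:ℂ)*(r:ℂ)*(n:ℂ) = 1 := by exact_mod_cast hrn
      have h2 : ((Real.sqrt n:ℝ):ℂ) * (r:ℂ) = 1 := by exact_mod_cast hsr
      rw [h1, h2]
    · rw [hBdef, Matrix.trace_smul, hJtr]
      have : (r:ℂ) • (n:ℂ) = ((r * n : ℝ):ℂ) := by push_cast; simp [smul_eq_mul]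
      rw [this]
      simp only [Complex.ofReal_re]
      positivity
  exact ⟨habs, part2, part3, by rw [part2, part3, mul_one]⟩
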